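/- Let D = (V,E) be a finite directed graph with n = |V| vertices. A subset S ⊆ V is a feedback vertex set of D if and only if there exists a function ℓ : V → {0,1,...,n-1} such that for every edge (u,v) ∈ E, ℓ(v) ≥ ℓ(u) + 1 - n·[u ∈ S] - n·[v ∈ S], where [·] is the 0/1 indicator. -/

import Mathlib

/-- A directed cycle in a digraph given by edge relation `E`: a nonempty list
`v :: rest` such that consecutive vertices are joined by edges and the last
vertex has an edge back to `v`. -/
def IsCycle {V : Type*} (E : V → V → Prop) : List V → Prop
  | [] => False
  | v :: rest => List.Chain E v (rest ++ [v])

/-- `S` is a feedback vertex set: it contains at least one vertex of every directed cycle. -/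
def IsFVS {V : Type*} (E : V → V → Prop) (S : Set V) : Prop :=
  ∀ l, IsCycle E l → ∃ x ∈ l, x ∈ S

/-- A digraph is acyclic if it has no directed cycle. -/
def IsAcyclicDigraph {V : Type*} (E : V → V → Prop) : Prop :=
  ∀ l, ¬ IsCycle E l

lemma chain_of_transGen' {V : Type*} {R : V → V → Prop} {a b : V}
    (h : Relation.TransGen R a b) : ∃ l, List.Chain R a (l ++ [b]) := by
  induction h with
  | single h => exact ⟨[], List.Chain.cons h List.Chain.nil⟩
  | @tail b c _ h ih =>
    obtain ⟨l, hl⟩ := ih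
    refine ⟨l ++ [b], ?_⟩
    rw [List.append_assoc, List.singleton_append]
    unfold List.Chain at *
    rw [← List.cons_append, List.isChain_split]
    exact ⟨hl, List.Chain.cons h List.Chain.nil⟩

lemma chain_snd' {V : Type*} {P : V → Prop} {R : V → V → Prop}
    (hR : ∀ a b, R a b → P b) : ∀ {a : V} {l : List V}, List.Chain R a l → ∀ x ∈ l, P x := by
  intro a l
  induction l generalizing a with
  | nil => intro _ x hx; simp at hx
  | cons b t ih =>
    intro hc x hx
    simp only [List.Chain, List.isChain_cons_cons] at hc
    rcases List.mem_cons.mp hx with rfl | hx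
    · exact hR _ _ hc.1
    · exact ih hc.2 x hx

lemma chain_incr' {V : Type*} {E : V → V → Prop} {S : Set V} {ℓ : V → ℕ}
    (hstep : ∀ u v, E u v → u ∉ S → v ∉ S → ℓ u < ℓ v) :
    ∀ {a : V} {l : List V}, List.Chain E a l → (∀ x ∈ a :: l, x ∉ S) →
      ∀ x ∈ l, ℓ a < ℓ x := by
  intro a l
  induction l generalizing a with
  | nil => intro _ _ x hx; simp at hx
  | cons b t ih =>
    intro hc hS x hx
    simp only [List.Chain, List.isChain_cons_cons] at hc
    have hab : ℓ a < ℓ b := hstep a b hc.1 (hS a (by simp)) (hS b (by simp))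
    rcases List.mem_cons.mp hx with rfl | hx
    · exact hab
    · exact hab.trans (ih hc.2 (fun y hy => hS y (List.mem_cons_of_mem _ hy)) x hx)

/-- correctness of the polynomial-size ILP formulation of DFVS. -/
theorem stmt_6 {V : Type*} [Fintype V] [DecidableEq V] (E : V → V → Prop)
    (S : Finset V) :
    IsFVS E ↑S ↔
      ∃ ℓ : V → ℕ, (∀ v, ℓ v ≤ Fintype.card V - 1) ∧
        ∀ u v, E u v →
          (ℓ u : ℤ) + 1 - (Fintype.card V) * (if u ∈ S then 1 else 0)
            - (Fintype.card V) * (if v ∈ S then 1 else 0) ≤ (ℓ v : ℤ) := by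
  classical
  constructor
  · intro h
    set E' : V → V → Prop := fun u v => E u v ∧ u ∉ S ∧ v ∉ S with hE'
    have irr : ∀ v, ¬ Relation.TransGen E' v v := by
      intro v hv
      obtain ⟨l, hl⟩ := chain_of_transGen' hv
      have hcycle : IsCycle E (v :: l) := List.Chain.imp (fun a b h => h.1) hl
      obtain ⟨x, hx, hxS⟩ := h _ hcycle
      have hall : ∀ y ∈ l ++ [v], y ∉ S :=
        chain_snd' (P := fun y => y ∉ S) (fun a b hab => hab.2.2) hl
      have hx' : x ∈ l ++ [v] := by
        rcases List.mem_cons.mp hx with rfl | hx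
        · simp
        · simp [hx]
      exact hall x hx' (by simpa using hxS)
    set ℓ : V → ℕ := fun v => (Finset.univ.filter (fun w => Relation.TransGen E' w v)).card
      with hℓ
    have hbound : ∀ v, ℓ v ≤ Fintype.card V - 1 := by
      intro v
      have hsub : (Finset.univ.filter (fun w => Relation.TransGen E' w v)) ⊆
          Finset.univ.erase v := by
        intro w hw
        rw [Finset.mem_filter] at hw
        refine Finset.mem_erase.mpr ⟨?_, Finset.mem_univ _⟩
        rintro rfl
        exact irr _ hw.2
      calc ℓ v ≤ (Finset.univ.erase v).card := Finset.card_le_card hsub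
        _ = Fintype.card V - 1 := by
            rw [Finset.card_erase_of_mem (Finset.mem_univ _), Finset.card_univ]
    have hmono : ∀ u v, E' u v → ℓ u + 1 ≤ ℓ v := by
      intro u v huv
      have hins : insert u (Finset.univ.filter (fun w => Relation.TransGen E' w u)) ⊆
          Finset.univ.filter (fun w => Relation.TransGen E' w v) := by
        intro w hw
        rw [Finset.mem_insert] at hw
        rw [Finset.mem_filter]
        refine ⟨Finset.mem_univ _, ?_⟩
        rcases hw with rfl | hw
        · exact Relation.TransGen.single huv
        · rw [Finset.mem_filter] at hw
          exact hw.2.tail huv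
      have hu : u ∉ Finset.univ.filter (fun w => Relation.TransGen E' w u) := by
        rw [Finset.mem_filter]
        exact fun hc => irr u hc.2
      have := Finset.card_le_card hins
      rwa [Finset.card_insert_of_notMem hu] at this
    refine ⟨ℓ, hbound, ?_⟩
    intro u v huv
    have hn : 0 < Fintype.card V := Fintype.card_pos_iff.mpr ⟨u⟩
    have h1 := hbound u
    by_cases hu : u ∈ S <;> by_cases hv : v ∈ S <;> simp only [hu, hv, if_pos, if_neg,
      not_false_iff, mul_one, mul_zero]
    · omega
    · omega
    · omega
    · have := hmono u v ⟨huv, by simpa using hu, by simpa using hv⟩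
      omega
  · rintro ⟨ℓ, hbound, hcon⟩ l hcycle
    by_contra hno
    push_neg at hno
    cases l with
    | nil => exact hcycle
    | cons v rest =>
      simp only [IsCycle] at hcycle
      have hstep : ∀ u w, E u w → u ∉ (↑S : Set V) → w ∉ (↑S : Set V) → ℓ u < ℓ w := by
        intro u w he hu hw
        have := hcon u w he
        rw [if_neg (by simpa using hu), if_neg (by simpa using hw)] at this
        omega
      have hS' : ∀ x ∈ v :: (rest ++ [v]), x ∉ (↑S : Set V) := by
        intro x hx
        refine hno x ?_
        simp only [List.mem_cons, List.mem_append, List.mem_singleton] at hx ⊢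
        tauto
      have := chain_incr' hstep hcycle hS' v (by simp)
      exact lt_irrefl _ this
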